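/- arXiv:2302.11829 — 2 statements merged into one kernel-verified Lean document; each statement's English description precedes it below -/
import Mathlib

section
/- With the construction of ũ_g^F below, there exists N > 0 such that for every g ∈ ℝ^{m₁−1} with g_i ≥ N for all i ∈ [m₁−1], and for any choice of x^i ∈ argmin_{x ∈ Γ_i ∩ f_g^{-1}(n)} x_i for each i ∈ [m₁−1], there exists i ∈ [m₁−1] such that (x^i, n) is a strong Stackelberg equilibrium of the game (u^L, ũ_g^F). -/
open scoped Classical
open Finset

noncomputable section

/-- The leader's mixed-strategy simplex Δ_m. -/
def simplex (m : ℕ) : Set (Fin m → ℝ) := stdSimplex ℝ (Fin m)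

/-- Linear extension of a payoff matrix to mixed strategies: u(x,j) = ∑ i, x i * u i j. -/
def pay {m n : ℕ} (u : Fin m → Fin n → ℝ) (x : Fin m → ℝ) (j : Fin n) : ℝ :=
  ∑ i, x i * u i j

/-- Inner product on ℝ^m. -/
def dot {m : ℕ} (a x : Fin m → ℝ) : ℝ := ∑ i, a i * x i

/-- min_{j ∈ S} u(x, j). -/
def minOnL {m n : ℕ} (u : Fin m → Fin n → ℝ) (S : Set (Fin n)) (x : Fin m → ℝ) : ℝ :=
  sInf ((fun j => pay u x j) '' S)

/-- The leader's maximin value M_S = max_{x∈Δ_m} min_{j∈S} u(x,j). -/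
def Mval {m n : ℕ} (u : Fin m → Fin n → ℝ) (S : Set (Fin n)) : ℝ :=
  sSup (minOnL u S '' simplex m)

/-- The set 𝓜_S of maximin strategies. -/
def argMM {m n : ℕ} (u : Fin m → Fin n → ℝ) (S : Set (Fin n)) : Set (Fin m → ℝ) :=
  {x ∈ simplex m | minOnL u S x = Mval u S}

/-- The follower's best-response set BR(x) = argmax_j uF(x,j). -/
def BR {m n : ℕ} (uF : Fin m → Fin n → ℝ) (x : Fin m → ℝ) : Set (Fin n) :=
  {j | ∀ j', pay uF x j' ≤ pay uF x j}

/-- Strong Stackelberg equilibrium of the game (uL, uF). -/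
def SSE {m n : ℕ} (uL uF : Fin m → Fin n → ℝ) (x : Fin m → ℝ) (j : Fin n) : Prop :=
  x ∈ simplex m ∧ j ∈ BR uF x ∧
    ∀ x' ∈ simplex m, ∀ j' ∈ BR uF x', pay uL x' j' ≤ pay uL x j

/-- (x, j) is inducible with respect to the leader payoff uL. -/
def Inducible {m n : ℕ} (uL : Fin m → Fin n → ℝ) (x : Fin m → ℝ) (j : Fin n) : Prop :=
  ∃ uF : Fin m → Fin n → ℝ, SSE uL uF x j

/-- μ is a (maximin-)cover of S w.r.t. uL: max_{x∈𝓜_S} max_{j∈BR(x)} uL(x,j) < M_S. -/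
def IsCover {m n : ℕ} (uL μ : Fin m → Fin n → ℝ) (S : Set (Fin n)) : Prop :=
  ∀ x ∈ argMM uL S, ∀ j ∈ BR μ x, pay uL x j < Mval uL S

/-- μ is a proper cover of S w.r.t. uL. -/
def IsProperCover {m n : ℕ} (uL μ : Fin m → Fin n → ℝ) (S : Set (Fin n)) : Prop :=
  IsCover uL μ S ∧ ∀ x ∈ simplex m, ∀ j ∈ S, j ∉ BR μ x

/-- The facet Γ_i = {x ∈ Δ_m : 1 − x_i = Σ_{k=m₁}^m x_k} (0-based indices: the paper's
actions m₁,…,m are the indices k with m₁−1 ≤ (k:ℕ)). -/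
def GammaSet {m : ℕ} (m₁ : ℕ) (i : Fin m) : Set (Fin m → ℝ) :=
  {x ∈ simplex m |
    1 - x i = ∑ k ∈ Finset.univ.filter (fun k : Fin m => m₁ - 1 ≤ (k : ℕ)), x k}

/-- W = min_{i∈[m], j∈[n]} μ(i,j) − 1. -/
def Wmin {m n : ℕ} (μ : Fin m → Fin n → ℝ) : ℝ :=
  sInf (Set.range fun p : Fin m × Fin n => μ p.1 p.2) - 1

/-- The follower payoff ũ_g^F (as a matrix; on Δ_m its linear extension is
ũ_g^F(x,j) = Σ_{i=m₁}^m x_i·μ(i,j) for j ≠ n and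
ũ_g^F(x,n) = Σ_{i=1}^{m₁−1} x_i·g_i + W·Σ_{i=m₁}^m x_i). -/
def tuFg {m n : ℕ} (m₁ : ℕ) (μ : Fin m → Fin n → ℝ) (jn : Fin n) (g : Fin m → ℝ) :
    Fin m → Fin n → ℝ :=
  fun i j =>
    if j = jn then (if (i : ℕ) < m₁ - 1 then g i else Wmin μ)
    else (if (i : ℕ) < m₁ - 1 then 0 else μ i j)

/-- f_g^{-1}(n) = {x ∈ Δ_m : n ∈ f_g(x)} where f_g is the BR-correspondence of ũ_g^F. -/
def finv {m n : ℕ} (m₁ : ℕ) (μ : Fin m → Fin n → ℝ) (jn : Fin n) (g : Fin m → ℝ) :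
    Set (Fin m → ℝ) :=
  {x ∈ simplex m | jn ∈ BR (tuFg m₁ μ jn g) x}

def lowF (m m₁ : ℕ) : Finset (Fin m) := univ.filter (fun k => (k : ℕ) < m₁ - 1)
def highF (m m₁ : ℕ) : Finset (Fin m) := univ.filter (fun k => m₁ - 1 ≤ (k : ℕ))

lemma sum_low_high {m : ℕ} (m₁ : ℕ) (f : Fin m → ℝ) :
    ∑ k ∈ lowF m m₁, f k + ∑ k ∈ highF m m₁, f k = ∑ k, f k := by
  rw [lowF, highF]
  rw [← Finset.sum_filter_add_sum_filter_not univ (fun k : Fin m => (k : ℕ) < m₁ - 1) f]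
  congr 1
  apply Finset.sum_congr _ (fun _ _ => rfl)
  apply Finset.filter_congr
  intro k _
  simp [Nat.not_lt]

lemma pay_tuFg_jn {m n : ℕ} (m₁ : ℕ) (μ : Fin m → Fin n → ℝ) (jn : Fin n) (g : Fin m → ℝ)
    (x : Fin m → ℝ) :
    pay (tuFg m₁ μ jn g) x jn
      = ∑ k ∈ lowF m m₁, x k * g k + Wmin μ * ∑ k ∈ highF m m₁, x k := by
  rw [pay, ← sum_low_high m₁, Finset.mul_sum]
  congr 1
  · apply Finset.sum_congr rfl
    intro k hk
    simp only [lowF, Finset.mem_filter] at hk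
    simp [tuFg, hk.2]
  · apply Finset.sum_congr rfl
    intro k hk
    simp only [highF, Finset.mem_filter] at hk
    simp [tuFg, Nat.not_lt.mpr hk.2, mul_comm]

lemma pay_tuFg_ne {m n : ℕ} (m₁ : ℕ) (μ : Fin m → Fin n → ℝ) (jn : Fin n) (g : Fin m → ℝ)
    (x : Fin m → ℝ) {j : Fin n} (hj : j ≠ jn) :
    pay (tuFg m₁ μ jn g) x j = ∑ k ∈ highF m m₁, x k * μ k j := by
  rw [pay, ← sum_low_high m₁]
  have h1 : ∑ k ∈ lowF m m₁, x k * tuFg m₁ μ jn g k j = 0 := by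
    apply Finset.sum_eq_zero
    intro k hk
    simp only [lowF, Finset.mem_filter] at hk
    simp [tuFg, hj, hk.2]
  rw [h1, zero_add]
  apply Finset.sum_congr rfl
  intro k hk
  simp only [highF, Finset.mem_filter] at hk
  simp [tuFg, hj, Nat.not_lt.mpr hk.2]

lemma pay_uL_jn {m n : ℕ} (m₁ : ℕ) (uL : Fin m → Fin n → ℝ) (jn : Fin n) (Mn : ℝ)
    (hhigh : ∀ i : Fin m, m₁ - 1 ≤ (i : ℕ) → uL i jn = Mn)
    (x : Fin m → ℝ) (hx : ∑ k, x k = 1) :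
    pay uL x jn = Mn - ∑ k ∈ lowF m m₁, x k * (Mn - uL k jn) := by
  have : ∑ k ∈ lowF m m₁, x k * (Mn - uL k jn)
      = ∑ k, x k * (Mn - uL k jn) := by
    rw [← sum_low_high m₁ (fun k => x k * (Mn - uL k jn))]
    have h0 : ∑ k ∈ highF m m₁, x k * (Mn - uL k jn) = 0 := by
      apply Finset.sum_eq_zero
      intro k hk
      simp only [highF, Finset.mem_filter] at hk
      rw [hhigh k hk.2]
      ring
    rw [h0, add_zero]
  rw [this, pay]
  have : ∑ k, x k * (Mn - uL k jn) = (∑ k, x k) * Mn - ∑ k, x k * uL k jn := by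
    rw [Finset.sum_mul, ← Finset.sum_sub_distrib]
    apply Finset.sum_congr rfl
    intro k _
    ring
  rw [this, hx]
  ring

lemma Wmin_le {m n : ℕ} (μ : Fin m → Fin n → ℝ) (i : Fin m) (j : Fin n) :
    Wmin μ + 1 ≤ μ i j := by
  have hb : BddBelow (Set.range fun p : Fin m × Fin n => μ p.1 p.2) :=
    (Set.finite_range _).bddBelow
  have h := csInf_le hb ⟨(i, j), rfl⟩
  rw [Wmin]; linarith

def Zface (m m₁ : ℕ) : Set (Fin m → ℝ) :=
  {x ∈ simplex m | ∀ k : Fin m, (k : ℕ) < m₁ - 1 → x k = 0}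

lemma isCompact_Zface (m m₁ : ℕ) : IsCompact (Zface m m₁) := by
  have hC : IsClosed {x : Fin m → ℝ | ∀ k : Fin m, (k : ℕ) < m₁ - 1 → x k = 0} := by
    have : {x : Fin m → ℝ | ∀ k : Fin m, (k : ℕ) < m₁ - 1 → x k = 0}
        = ⋂ k : Fin m, {x : Fin m → ℝ | (k : ℕ) < m₁ - 1 → x k = 0} := by
      ext x; simp
    rw [this]
    apply isClosed_iInter
    intro k
    by_cases h : (k : ℕ) < m₁ - 1
    · simp only [h, true_implies]
      exact isClosed_eq (continuous_apply k) continuous_const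
    · simp only [h, false_implies]
      exact isClosed_univ
  have : Zface m m₁ = stdSimplex ℝ (Fin m) ∩
      {x : Fin m → ℝ | ∀ k : Fin m, (k : ℕ) < m₁ - 1 → x k = 0} := rfl
  rw [this]
  exact (isCompact_stdSimplex ℝ (Fin m)).inter_right hC

def epoint (m : ℕ) (i : Fin m) : Fin m → ℝ := fun k => if k = i then 1 else 0

lemma epoint_mem (m : ℕ) (i : Fin m) : epoint m i ∈ simplex m := by
  constructor
  · intro k; simp only [epoint]; split <;> norm_num
  · simp [epoint]

lemma pay_epoint {m n : ℕ} (u : Fin m → Fin n → ℝ) (i : Fin m) (j : Fin n) :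
    pay u (epoint m i) j = u i j := by
  simp only [pay, epoint]
  rw [Finset.sum_eq_single i]
  · simp
  · intro k _ hk; simp [hk]
  · simp

lemma minOn_singleton {m n : ℕ} (u : Fin m → Fin n → ℝ) (jn : Fin n) (x : Fin m → ℝ) :
    minOnL u {jn} x = pay u x jn := by
  rw [minOnL, Set.image_singleton, csInf_singleton]

lemma pay_le_Mn {m n : ℕ} {uL : Fin m → Fin n → ℝ} {jn : Fin n} {m₁ : ℕ} {Mn : ℝ}
    (hhigh : ∀ i : Fin m, m₁ - 1 ≤ (i : ℕ) → uL i jn = Mn)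
    (hlow : ∀ i : Fin m, (i : ℕ) < m₁ - 1 → uL i jn < Mn)
    {x : Fin m → ℝ} (hx : x ∈ simplex m) : pay uL x jn ≤ Mn := by
  have hb : ∀ i : Fin m, uL i jn ≤ Mn := by
    intro i
    by_cases h : (i : ℕ) < m₁ - 1
    · exact (hlow i h).le
    · exact (hhigh i (Nat.not_lt.mp h)).le
  calc pay uL x jn = ∑ i, x i * uL i jn := rfl
    _ ≤ ∑ i, x i * Mn := Finset.sum_le_sum (fun i _ => mul_le_mul_of_nonneg_left (hb i) (hx.1 i))
    _ = Mn := by rw [← Finset.sum_mul, hx.2, one_mul]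

lemma Mval_eq {m n : ℕ} {uL : Fin m → Fin n → ℝ} {jn : Fin n} {m₁ : ℕ} {Mn : ℝ}
    (hm₁ : 1 < m₁) (hm₁m : m₁ ≤ m)
    (hhigh : ∀ i : Fin m, m₁ - 1 ≤ (i : ℕ) → uL i jn = Mn)
    (hlow : ∀ i : Fin m, (i : ℕ) < m₁ - 1 → uL i jn < Mn) :
    Mval uL {jn} = Mn := by
  have h0 : m₁ - 1 < m := by omega
  apply le_antisymm
  · apply csSup_le
    · exact ⟨minOnL uL {jn} (epoint m ⟨m₁ - 1, h0⟩), ⟨_, epoint_mem m _, rfl⟩⟩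
    · rintro y ⟨x, hx, rfl⟩
      rw [minOn_singleton]
      exact pay_le_Mn hhigh hlow hx
  · have hmem : Mn ∈ minOnL uL {jn} '' simplex m := by
      refine ⟨epoint m ⟨m₁ - 1, h0⟩, epoint_mem m _, ?_⟩
      rw [minOn_singleton, pay_epoint]
      exact hhigh _ (le_refl _)
    apply le_csSup _ hmem
    refine ⟨Mn, ?_⟩
    rintro y ⟨x, hx, rfl⟩
    rw [minOn_singleton]
    exact pay_le_Mn hhigh hlow hx

lemma continuous_pay {m n : ℕ} (u : Fin m → Fin n → ℝ) (j : Fin n) :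
    Continuous fun x : Fin m → ℝ => pay u x j :=
  continuous_finset_sum _ (fun i _ => (continuous_apply i).mul continuous_const)

lemma pay_Zface_jn {m n : ℕ} {uL : Fin m → Fin n → ℝ} {jn : Fin n} {m₁ : ℕ} {Mn : ℝ}
    (hhigh : ∀ i : Fin m, m₁ - 1 ≤ (i : ℕ) → uL i jn = Mn)
    {x : Fin m → ℝ} (hx : x ∈ Zface m m₁) : pay uL x jn = Mn := by
  have : ∀ i : Fin m, x i * uL i jn = x i * Mn := by
    intro i
    by_cases h : (i : ℕ) < m₁ - 1
    · rw [hx.2 i h]; ring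
    · rw [hhigh i (Nat.not_lt.mp h)]
  calc pay uL x jn = ∑ i, x i * Mn := Finset.sum_congr rfl (fun i _ => this i)
    _ = Mn := by rw [← Finset.sum_mul, hx.1.2, one_mul]

lemma cover_lt {m n : ℕ} {uL : Fin m → Fin n → ℝ} {jn : Fin n} {m₁ : ℕ} {Mn : ℝ}
    {μ : Fin m → Fin n → ℝ}
    (hm₁ : 1 < m₁) (hm₁m : m₁ ≤ m)
    (hhigh : ∀ i : Fin m, m₁ - 1 ≤ (i : ℕ) → uL i jn = Mn)
    (hlow : ∀ i : Fin m, (i : ℕ) < m₁ - 1 → uL i jn < Mn)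
    (hμ : IsProperCover uL μ {jn})
    {x : Fin m → ℝ} (hx : x ∈ Zface m m₁) {j : Fin n} (hj : j ≠ jn)
    (hmax : ∀ j', j' ≠ jn → pay μ x j' ≤ pay μ x j) :
    pay uL x j < Mn := by
  have hxs : x ∈ simplex m := hx.1
  have hnotBR : jn ∉ BR μ x := hμ.2 x hxs jn rfl
  have hex : ∃ j₁ : Fin n, pay μ x jn < pay μ x j₁ := by
    by_contra hcon
    push_neg at hcon
    exact hnotBR (fun j' => hcon j')
  obtain ⟨j₁, hj₁⟩ := hex
  have hj₁ne : j₁ ≠ jn := by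
    intro h; rw [h] at hj₁; exact lt_irrefl _ hj₁
  have hBR : j ∈ BR μ x := by
    intro j'
    by_cases h : j' = jn
    · rw [h]; exact (hj₁.trans_le (hmax j₁ hj₁ne)).le
    · exact hmax j' h
  have hmm : x ∈ argMM uL {jn} := by
    refine ⟨hxs, ?_⟩
    rw [minOn_singleton, pay_Zface_jn hhigh hx, Mval_eq hm₁ hm₁m hhigh hlow]
  have := hμ.1 x hmm j hBR
  rwa [Mval_eq hm₁ hm₁m hhigh hlow] at this

lemma exists_delta {m n : ℕ} {uL : Fin m → Fin n → ℝ} {jn : Fin n} {m₁ : ℕ} {Mn : ℝ}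
    {μ : Fin m → Fin n → ℝ}
    (hm₁ : 1 < m₁) (hm₁m : m₁ ≤ m)
    (hhigh : ∀ i : Fin m, m₁ - 1 ≤ (i : ℕ) → uL i jn = Mn)
    (hlow : ∀ i : Fin m, (i : ℕ) < m₁ - 1 → uL i jn < Mn)
    (hμ : IsProperCover uL μ {jn}) :
    ∃ δ : ℝ, 0 < δ ∧ ∀ x ∈ Zface m m₁, ∀ j : Fin n, j ≠ jn →
      (∀ j', j' ≠ jn → pay μ x j' ≤ pay μ x j) → pay uL x j ≤ Mn - δ := by
  have key : ∀ j : Fin n, ∃ d : ℝ, 0 < d ∧ (j ≠ jn → ∀ x ∈ Zface m m₁,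
      (∀ j', j' ≠ jn → pay μ x j' ≤ pay μ x j) → pay uL x j ≤ Mn - d) := by
    intro j
    by_cases hj : j = jn
    · exact ⟨1, one_pos, fun h => absurd hj h⟩
    set K : Set (Fin m → ℝ) :=
      {x ∈ Zface m m₁ | ∀ j', j' ≠ jn → pay μ x j' ≤ pay μ x j} with hK
    by_cases hne : K.Nonempty
    · have hKc : IsCompact K := by
        have hKeq : K = Zface m m₁ ∩
            ⋂ j' : Fin n, {x : Fin m → ℝ | j' ≠ jn → pay μ x j' ≤ pay μ x j} := by
          ext x
          simp only [hK, Set.sep_setOf, Set.mem_setOf_eq, Set.mem_inter_iff, Set.mem_iInter]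
        rw [hKeq]
        apply (isCompact_Zface m m₁).inter_right
        apply isClosed_iInter
        intro j'
        by_cases h : j' = jn
        · simp only [h, ne_eq, not_true_eq_false, false_implies]
          exact isClosed_univ
        · simp only [ne_eq, h, not_false_eq_true, true_implies]
          exact isClosed_le (continuous_pay μ j') (continuous_pay μ j)
      obtain ⟨w, hwK, hwmax⟩ := hKc.exists_isMaxOn hne
        ((continuous_pay uL j).continuousOn)
      have hwlt : pay uL w j < Mn := cover_lt hm₁ hm₁m hhigh hlow hμ hwK.1 hj hwK.2
      refine ⟨Mn - pay uL w j, by linarith, fun _ x hxZ hc => ?_⟩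
      have hxK : x ∈ K := ⟨hxZ, hc⟩
      have := hwmax hxK
      simp only [Set.mem_setOf_eq] at this
      linarith
    · refine ⟨1, one_pos, fun _ x hxZ hc => absurd ⟨x, hxZ, hc⟩ hne⟩
  choose d hd1 hd2 using key
  have hnn : (Finset.univ : Finset (Fin n)).Nonempty := ⟨jn, Finset.mem_univ jn⟩
  refine ⟨Finset.univ.inf' hnn d, ?_, ?_⟩
  · rw [Finset.lt_inf'_iff]
    exact fun j _ => hd1 j
  · intro x hx j hj hc
    have h1 := hd2 j hj x hx hc
    have h2 : Finset.univ.inf' hnn d ≤ d j := Finset.inf'_le d (Finset.mem_univ j)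
    linarith

lemma lowF_not_high {m m₁ : ℕ} {k : Fin m} (hk : (k : ℕ) < m₁ - 1) :
    ¬ (m₁ - 1 ≤ (k : ℕ)) := Nat.not_le.mpr hk

lemma Zface_sum_high {m m₁ : ℕ} {z : Fin m → ℝ} (hz : z ∈ Zface m m₁) :
    ∑ k ∈ highF m m₁, z k = 1 := by
  have h := sum_low_high m₁ z
  have h0 : ∑ k ∈ lowF m m₁, z k = 0 := by
    apply Finset.sum_eq_zero
    intro k hk
    exact hz.2 k (Finset.mem_filter.mp hk).2
  rw [h0, zero_add] at h
  rw [h, hz.1.2]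

lemma Zface_pay {m n m₁ : ℕ} (u : Fin m → Fin n → ℝ) {z : Fin m → ℝ}
    (hz : z ∈ Zface m m₁) (j : Fin n) :
    pay u z j = ∑ k ∈ highF m m₁, z k * u k j := by
  rw [pay, ← sum_low_high m₁]
  have h0 : ∑ k ∈ lowF m m₁, z k * u k j = 0 := by
    apply Finset.sum_eq_zero
    intro k hk
    rw [hz.2 k (Finset.mem_filter.mp hk).2, zero_mul]
  rw [h0, zero_add]

def normHigh (m m₁ : ℕ) (x' : Fin m → ℝ) (s : ℝ) : Fin m → ℝ :=
  fun k => if m₁ - 1 ≤ (k : ℕ) then x' k / s else 0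

lemma normHigh_mem {m m₁ : ℕ} {x' : Fin m → ℝ} (hx' : x' ∈ simplex m)
    {s : ℝ} (hs : s = ∑ k ∈ highF m m₁, x' k) (hspos : 0 < s) :
    normHigh m m₁ x' s ∈ Zface m m₁ := by
  refine ⟨⟨?_, ?_⟩, ?_⟩
  · intro k
    simp only [normHigh]
    split
    · exact div_nonneg (hx'.1 k) hspos.le
    · exact le_refl 0
  · rw [← sum_low_high m₁]
    have h0 : ∑ k ∈ lowF m m₁, normHigh m m₁ x' s k = 0 := by
      apply Finset.sum_eq_zero
      intro k hk
      simp only [normHigh, lowF_not_high (Finset.mem_filter.mp hk).2, if_false]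
    have h1 : ∑ k ∈ highF m m₁, normHigh m m₁ x' s k = 1 := by
      have : ∑ k ∈ highF m m₁, normHigh m m₁ x' s k
          = (∑ k ∈ highF m m₁, x' k) / s := by
        rw [Finset.sum_div]
        apply Finset.sum_congr rfl
        intro k hk
        simp only [normHigh, (Finset.mem_filter.mp hk).2, if_true]
      rw [this, ← hs, div_self hspos.ne']
    rw [h0, h1, zero_add]
  · intro k hk
    simp only [normHigh, lowF_not_high hk, if_false]

lemma normHigh_pay {m n m₁ : ℕ} (u : Fin m → Fin n → ℝ) (x' : Fin m → ℝ)
    {s : ℝ} (hspos : 0 < s) (j : Fin n) :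
    pay u (normHigh m m₁ x' s) j = (∑ k ∈ highF m m₁, x' k * u k j) / s := by
  rw [pay, ← sum_low_high m₁]
  have h0 : ∑ k ∈ lowF m m₁, normHigh m m₁ x' s k * u k j = 0 := by
    apply Finset.sum_eq_zero
    intro k hk
    simp only [normHigh, lowF_not_high (Finset.mem_filter.mp hk).2, if_false, zero_mul]
  rw [h0, zero_add, Finset.sum_div]
  apply Finset.sum_congr rfl
  intro k hk
  simp only [normHigh, (Finset.mem_filter.mp hk).2, if_true]
  rw [div_mul_eq_mul_div]

set_option maxHeartbeats 1600000 in
/-- there is N > 0 such that whenever g_i ≥ N for all i ∈ [m₁−1], for any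
choice of critical points x^i ∈ argmin_{x ∈ Γ_i ∩ f_g^{-1}(n)} x_i, some (x^i, n) is a
strong Stackelberg equilibrium of (u^L, ũ_g^F). -/
theorem exists_N_sse {m n : ℕ}
    (uL : Fin m → Fin n → ℝ) (jn : Fin n)
    (m₁ : ℕ) (hm₁ : 1 < m₁) (hm₁m : m₁ ≤ m)
    (Mn : ℝ)
    (hhigh : ∀ i : Fin m, m₁ - 1 ≤ (i : ℕ) → uL i jn = Mn)
    (hlow : ∀ i : Fin m, (i : ℕ) < m₁ - 1 → uL i jn < Mn)
    (μ : Fin m → Fin n → ℝ) (hμ : IsProperCover uL μ {jn}) :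
    ∃ N : ℝ, 0 < N ∧
      ∀ g : Fin m → ℝ, (∀ i : Fin m, (i : ℕ) < m₁ - 1 → N ≤ g i) →
        ∀ xs : Fin m → Fin m → ℝ,
          (∀ i : Fin m, (i : ℕ) < m₁ - 1 →
            xs i ∈ GammaSet m₁ i ∩ finv m₁ μ jn g ∧
              ∀ x ∈ GammaSet m₁ i ∩ finv m₁ μ jn g, xs i i ≤ x i) →
          ∃ i : Fin m, (i : ℕ) < m₁ - 1 ∧ SSE uL (tuFg m₁ μ jn g) (xs i) jn := by
  classical
  have hmpos : 0 < m := by omega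
  by_cases hnontriv : ∃ j : Fin n, j ≠ jn
  swap
  · push_neg at hnontriv
    have hBR : jn ∈ BR μ (epoint m ⟨0, hmpos⟩) := by
      intro j'; rw [hnontriv j']
    exact absurd hBR (hμ.2 _ (epoint_mem m _) jn rfl)
  obtain ⟨j0, hj0⟩ := hnontriv
  obtain ⟨W, hWdef⟩ : ∃ W : ℝ, W = Wmin μ := ⟨_, rfl⟩
  have hWle : ∀ (i : Fin m) (j : Fin n), W + 1 ≤ μ i j := by
    intro i j; rw [hWdef]; exact Wmin_le μ i j
  have hm1m : m₁ - 1 < m := by omega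
  have hZne : (Zface m m₁).Nonempty := by
    refine ⟨epoint m ⟨m₁ - 1, hm1m⟩, epoint_mem m _, ?_⟩
    intro k hk
    have hne : k ≠ ⟨m₁ - 1, hm1m⟩ := by
      intro h
      rw [h] at hk
      simp at hk
    simp [epoint, hne]
  have hEne : ((univ : Finset (Fin n)).erase jn).Nonempty :=
    ⟨j0, Finset.mem_erase.mpr ⟨hj0, Finset.mem_univ _⟩⟩
  set F : (Fin m → ℝ) → ℝ :=
    fun z => ((univ : Finset (Fin n)).erase jn).sup' hEne (fun j => pay μ z j) with hFdef
  have hFcont : Continuous F :=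
    Continuous.finset_sup'_apply hEne (fun j _ => continuous_pay μ j)
  obtain ⟨zst, hzstZ, hzmin⟩ :=
    (isCompact_Zface m m₁).exists_isMinOn hZne hFcont.continuousOn
  obtain ⟨V, hVdef⟩ : ∃ V : ℝ, V = F zst := ⟨_, rfl⟩
  obtain ⟨A, hAdef⟩ : ∃ A : ℝ, A = V - W := ⟨_, rfl⟩
  have payV : ∀ j : Fin n, j ≠ jn → pay μ zst j ≤ V := by
    intro j hj
    rw [hVdef]
    exact Finset.le_sup' _ (Finset.mem_erase.mpr ⟨hj, Finset.mem_univ _⟩)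
  have hA1 : 1 ≤ A := by
    have h1 : W + 1 ≤ pay μ zst j0 := by
      calc W + 1 = ∑ i, zst i * (W + 1) := by
            rw [← Finset.sum_mul, hzstZ.1.2, one_mul]
        _ ≤ ∑ i, zst i * μ i j0 :=
            Finset.sum_le_sum (fun i _ => mul_le_mul_of_nonneg_left (hWle i j0) (hzstZ.1.1 i))
        _ = pay μ zst j0 := rfl
    have h2 := payV j0 hj0
    rw [hAdef]
    linarith
  have hApos : 0 < A := by linarith
  obtain ⟨δ, hδpos, hδ⟩ := exists_delta hm₁ hm₁m hhigh hlow hμ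
  obtain ⟨c, hcdef⟩ : ∃ c : Fin m → ℝ, c = fun k => Mn - uL k jn := ⟨_, rfl⟩
  have hcfun : ∀ k : Fin m, Mn - uL k jn = c k := fun k => (congrFun hcdef k).symm
  have hcpos : ∀ k : Fin m, (k : ℕ) < m₁ - 1 → 0 < c k := by
    intro k hk
    rw [← hcfun k, sub_pos]
    exact hlow k hk
  have hLne : (lowF m m₁).Nonempty := by
    refine ⟨⟨0, hmpos⟩, ?_⟩
    simp only [lowF, Finset.mem_filter, Finset.mem_univ, true_and]
    omega
  obtain ⟨SC, hSCdef⟩ : ∃ SC : ℝ, SC = ∑ k ∈ lowF m m₁, c k := ⟨_, rfl⟩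
  have hSCnn : 0 ≤ SC := by
    rw [hSCdef]
    exact Finset.sum_nonneg (fun k hk => (hcpos k (Finset.mem_filter.mp hk).2).le)
  have hcSC : ∀ k ∈ lowF m m₁, c k ≤ SC := by
    intro k hk
    rw [hSCdef]
    exact Finset.single_le_sum (fun j hj => (hcpos j (Finset.mem_filter.mp hj).2).le) hk
  obtain ⟨Pm, hPmdef⟩ : ∃ Pm : ℝ, Pm = ∑ i : Fin m, ∑ j : Fin n, |μ i j| := ⟨_, rfl⟩
  have habsμ : ∀ (i : Fin m) (j : Fin n), |μ i j| ≤ Pm := by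
    intro i j
    rw [hPmdef]
    calc |μ i j| ≤ ∑ j', |μ i j'| :=
          Finset.single_le_sum (f := fun j' : Fin n => |μ i j'|)
            (fun j' _ => abs_nonneg _) (Finset.mem_univ j)
      _ ≤ ∑ i' : Fin m, ∑ j' : Fin n, |μ i' j'| :=
          Finset.single_le_sum (f := fun i' : Fin m => ∑ j' : Fin n, |μ i' j'|)
            (fun i' _ => Finset.sum_nonneg (fun j' _ => abs_nonneg _)) (Finset.mem_univ i)
  have hPmnn : 0 ≤ Pm := (abs_nonneg _).trans (habsμ ⟨0, hmpos⟩ j0)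
  obtain ⟨P₀, hP₀def⟩ : ∃ P₀ : ℝ, P₀ = Pm + |W| + 1 := ⟨_, rfl⟩
  have hP₀1 : 1 ≤ P₀ := by
    have := abs_nonneg W
    rw [hP₀def]; linarith
  have hmuW : ∀ (i : Fin m) (j : Fin n), μ i j - W ≤ P₀ := by
    intro i j
    have h1 : μ i j ≤ Pm := (le_abs_self _).trans (habsμ i j)
    have h2 : -|W| ≤ W := neg_abs_le W
    rw [hP₀def]; linarith
  have hAP₀ : A ≤ P₀ := by
    obtain ⟨jA, hjAmem, hjAeq⟩ := Finset.exists_mem_eq_sup' hEne (fun j => pay μ zst j)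
    have h1 : pay μ zst jA ≤ Pm := by
      calc pay μ zst jA = ∑ i, zst i * μ i jA := rfl
        _ ≤ ∑ i, zst i * Pm := Finset.sum_le_sum (fun i _ =>
            mul_le_mul_of_nonneg_left ((le_abs_self _).trans (habsμ i jA)) (hzstZ.1.1 i))
        _ = Pm := by rw [← Finset.sum_mul, hzstZ.1.2, one_mul]
    have h2 : -|W| ≤ W := neg_abs_le W
    have h3 : V = pay μ zst jA := by rw [hVdef, hFdef]; exact hjAeq
    rw [hAdef, hP₀def]
    linarith
  obtain ⟨Q, hQdef⟩ : ∃ Q : ℝ, Q = ∑ i : Fin m, ∑ j : Fin n, |uL i j| := ⟨_, rfl⟩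
  have habsuL : ∀ (i : Fin m) (j : Fin n), |uL i j| ≤ Q := by
    intro i j
    rw [hQdef]
    calc |uL i j| ≤ ∑ j', |uL i j'| :=
          Finset.single_le_sum (f := fun j' : Fin n => |uL i j'|)
            (fun j' _ => abs_nonneg _) (Finset.mem_univ j)
      _ ≤ ∑ i' : Fin m, ∑ j' : Fin n, |uL i' j'| :=
          Finset.single_le_sum (f := fun i' : Fin m => ∑ j' : Fin n, |uL i' j'|)
            (fun i' _ => Finset.sum_nonneg (fun j' _ => abs_nonneg _)) (Finset.mem_univ i)
  have hQnn : 0 ≤ Q := (abs_nonneg _).trans (habsuL ⟨0, hmpos⟩ j0)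
  obtain ⟨N, hNdef⟩ : ∃ N : ℝ, N = max (P₀ + 1) (P₀ * (Q + |Mn - δ| + SC) / δ + 1) :=
    ⟨_, rfl⟩
  have hNP₀ : P₀ + 1 ≤ N := by rw [hNdef]; exact le_max_left _ _
  have hNpos : 0 < N := by linarith
  have hNδ : P₀ * (Q + |Mn - δ| + SC) ≤ N * δ := by
    have h1 : P₀ * (Q + |Mn - δ| + SC) / δ + 1 ≤ N := by
      rw [hNdef]; exact le_max_right _ _
    have h3 := mul_le_mul_of_nonneg_right h1 hδpos.le
    rw [add_mul, div_mul_cancel₀ _ hδpos.ne', one_mul] at h3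
    linarith
  refine ⟨N, hNpos, ?_⟩
  intro g hg xs hxs
  have hgpos : ∀ k : Fin m, (k : ℕ) < m₁ - 1 → 0 < g k :=
    fun k hk => hNpos.trans_le (hg k hk)
  have hgA : ∀ k : Fin m, (k : ℕ) < m₁ - 1 → 0 < g k + A :=
    fun k hk => by have := hgpos k hk; linarith
  -- (α) : upper bound on the critical coordinate of each xs i
  have halpha : ∀ i : Fin m, (i : ℕ) < m₁ - 1 → xs i i ≤ A / (g i + A) := by
    intro i hi
    obtain ⟨t, htdef⟩ : ∃ t : ℝ, t = A / (g i + A) := ⟨_, rfl⟩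
    have hgAi := hgA i hi
    have htpos : 0 < t := by rw [htdef]; exact div_pos hApos hgAi
    have htlt : t < 1 := by
      rw [htdef, div_lt_one hgAi]
      have := hgpos i hi; linarith
    have hkey : t * (g i + A) = A := by
      rw [htdef]; exact div_mul_cancel₀ _ hgAi.ne'
    have hzsti : zst i = 0 := hzstZ.2 i hi
    obtain ⟨y, hydef⟩ : ∃ y : Fin m → ℝ,
        y = fun k => (if k = i then t else 0) + (1 - t) * zst k := ⟨_, rfl⟩
    have hyk : ∀ k, y k = (if k = i then t else 0) + (1 - t) * zst k :=
      fun k => congrFun hydef k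
    have hynn : ∀ k, 0 ≤ y k := by
      intro k
      have := hzstZ.1.1 k
      rw [hyk k]
      split <;> nlinarith
    have hysum : ∑ k, y k = 1 := by
      rw [hydef]
      rw [Finset.sum_add_distrib, Finset.sum_ite_eq' univ i, ← Finset.mul_sum, hzstZ.1.2]
      simp
    have hyi : y i = t := by rw [hyk i]; simp [hzsti]
    have hylow : ∀ k : Fin m, (k : ℕ) < m₁ - 1 → k ≠ i → y k = 0 := by
      intro k hk hki
      rw [hyk k, hzstZ.2 k hk]
      simp [hki]
    have hyhigh : ∑ k ∈ highF m m₁, y k = 1 - t := by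
      have hcongr : ∀ k ∈ highF m m₁, y k = (1 - t) * zst k := by
        intro k hk
        have hknl : ¬ ((k : ℕ) < m₁ - 1) := Nat.not_lt.mpr (Finset.mem_filter.mp hk).2
        have hki : k ≠ i := by intro h; rw [h] at hknl; exact hknl hi
        rw [hyk k]; simp [hki]
      rw [Finset.sum_congr rfl hcongr, ← Finset.mul_sum, Zface_sum_high hzstZ, mul_one]
    have hysimplex : y ∈ simplex m := ⟨hynn, hysum⟩
    have hyGamma : y ∈ GammaSet m₁ i := by
      refine ⟨hysimplex, ?_⟩
      rw [hyi]
      have hGH : (Finset.univ.filter (fun k : Fin m => m₁ - 1 ≤ (k : ℕ))) = highF m m₁ := rfl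
      rw [hGH, hyhigh]
    have hyBR : jn ∈ BR (tuFg m₁ μ jn g) y := by
      intro j'
      by_cases hj' : j' = jn
      · rw [hj']
      · rw [pay_tuFg_ne m₁ μ jn g y hj', pay_tuFg_jn m₁ μ jn g y, ← hWdef]
        have hhigh' : ∑ k ∈ highF m m₁, y k * μ k j'
            = (1 - t) * ∑ k ∈ highF m m₁, zst k * μ k j' := by
          rw [Finset.mul_sum]
          apply Finset.sum_congr rfl
          intro k hk
          have hknl : ¬ ((k : ℕ) < m₁ - 1) := Nat.not_lt.mpr (Finset.mem_filter.mp hk).2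
          have hki : k ≠ i := by intro h; rw [h] at hknl; exact hknl hi
          rw [hyk k]; simp [hki]; ring
        have hlow' : ∑ k ∈ lowF m m₁, y k * g k = t * g i := by
          have hiL : i ∈ lowF m m₁ := by
            simp only [lowF, Finset.mem_filter, Finset.mem_univ, true_and]; exact hi
          rw [Finset.sum_eq_single_of_mem i hiL]
          · rw [hyi]
          · intro k hk hki
            rw [hylow k (Finset.mem_filter.mp hk).2 hki, zero_mul]
        rw [hhigh', hlow', hyhigh]
        have hpayz : ∑ k ∈ highF m m₁, zst k * μ k j' ≤ V := by
          rw [← Zface_pay μ hzstZ j']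
          exact payV j' hj'
        have h1 : (1 - t) * ∑ k ∈ highF m m₁, zst k * μ k j' ≤ (1 - t) * V :=
          mul_le_mul_of_nonneg_left hpayz (by linarith)
        have h2 : (1 - t) * V = t * g i + W * (1 - t) := by
          have hVAW : V = A + W := by rw [hAdef]; ring
          rw [hVAW]
          linear_combination (-1 : ℝ) * hkey
        linarith
    have hyfinv : y ∈ finv m₁ μ jn g := ⟨hysimplex, hyBR⟩
    have hle := (hxs i hi).2 y ⟨hyGamma, hyfinv⟩
    rw [hyi] at hle
    rw [← htdef]
    exact hle
  -- (β) : lower bound on the g-weighted low mass wherever jn is a best response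
  have hbeta : ∀ x' : Fin m → ℝ, x' ∈ simplex m →
      jn ∈ BR (tuFg m₁ μ jn g) x' →
      (∑ k ∈ highF m m₁, x' k) * A ≤ ∑ k ∈ lowF m m₁, x' k * g k := by
    intro x' hx' hBRx
    have hsnn : 0 ≤ ∑ k ∈ highF m m₁, x' k := Finset.sum_nonneg (fun k _ => hx'.1 k)
    rcases eq_or_lt_of_le hsnn with hs0 | hspos
    · rw [← hs0, zero_mul]
      exact Finset.sum_nonneg (fun k hk =>
        mul_nonneg (hx'.1 k) (hgpos k (Finset.mem_filter.mp hk).2).le)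
    · have hxhZ : normHigh m m₁ x' (∑ k ∈ highF m m₁, x' k) ∈ Zface m m₁ :=
        normHigh_mem hx' rfl hspos
      obtain ⟨jA, hjAmem, hjAeq⟩ :=
        Finset.exists_mem_eq_sup' hEne
          (fun j => pay μ (normHigh m m₁ x' (∑ k ∈ highF m m₁, x' k)) j)
      have hjAne : jA ≠ jn := (Finset.mem_erase.mp hjAmem).1
      have hVle : V ≤ pay μ (normHigh m m₁ x' (∑ k ∈ highF m m₁, x' k)) jA := by
        rw [hVdef]
        calc F zst ≤ F (normHigh m m₁ x' (∑ k ∈ highF m m₁, x' k)) := hzmin hxhZ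
          _ = pay μ (normHigh m m₁ x' (∑ k ∈ highF m m₁, x' k)) jA := hjAeq
      have hpayxh : pay μ (normHigh m m₁ x' (∑ k ∈ highF m m₁, x' k)) jA
          = (∑ k ∈ highF m m₁, x' k * μ k jA) / (∑ k ∈ highF m m₁, x' k) :=
        normHigh_pay μ x' hspos jA
      have hBRjA := hBRx jA
      rw [pay_tuFg_ne m₁ μ jn g x' hjAne, pay_tuFg_jn m₁ μ jn g x', ← hWdef] at hBRjA
      have h1 : (∑ k ∈ highF m m₁, x' k) * V ≤ ∑ k ∈ highF m m₁, x' k * μ k jA := by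
        rw [hpayxh] at hVle
        rw [mul_comm]
        exact (le_div_iff₀ hspos).mp hVle
      have hAW : A = V - W := hAdef
      nlinarith [hBRjA, h1]
  -- (γ) : on Γ_i ∩ Δ, the low coordinates other than i vanish
  have hgamma : ∀ i : Fin m, (i : ℕ) < m₁ - 1 → ∀ x : Fin m → ℝ, x ∈ GammaSet m₁ i →
      ∑ k ∈ lowF m m₁, x k * c k = x i * c i := by
    intro i hi x hx
    have hiL : i ∈ lowF m m₁ := by
      simp only [lowF, Finset.mem_filter, Finset.mem_univ, true_and]; exact hi
    have hxsum := hx.1.2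
    have hGH : (Finset.univ.filter (fun k : Fin m => m₁ - 1 ≤ (k : ℕ))) = highF m m₁ := rfl
    have hhigheq : ∑ k ∈ highF m m₁, x k = 1 - x i := by
      rw [← hGH]; exact hx.2.symm
    have hloweq : ∑ k ∈ lowF m m₁, x k = x i := by
      have hsl := sum_low_high m₁ x
      rw [hhigheq, hxsum] at hsl
      linarith
    have herase : ∑ k ∈ (lowF m m₁).erase i, x k = 0 := by
      have hadd := Finset.add_sum_erase (lowF m m₁) x hiL
      rw [hloweq] at hadd
      linarith
    have hzero : ∀ k ∈ (lowF m m₁).erase i, x k = 0 := by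
      have hnn : ∀ k ∈ (lowF m m₁).erase i, 0 ≤ x k := fun k _ => hx.1.1 k
      exact (Finset.sum_eq_zero_iff_of_nonneg hnn).mp herase
    rw [← Finset.add_sum_erase (lowF m m₁) (fun k => x k * c k) hiL]
    have hz2 : ∑ k ∈ (lowF m m₁).erase i, x k * c k = 0 :=
      Finset.sum_eq_zero (fun k hk => by rw [hzero k hk, zero_mul])
    rw [hz2, add_zero]
  -- choose the best index i*
  obtain ⟨istar, histar, hstarmin⟩ :=
    Finset.exists_min_image (lowF m m₁) (fun k => c k / (g k + A)) hLne
  have histar' : (istar : ℕ) < m₁ - 1 := (Finset.mem_filter.mp histar).2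
  obtain ⟨hxmemi, hxmini⟩ := hxs istar histar'
  have hxsimp : xs istar ∈ simplex m := hxmemi.2.1
  have hxBR : jn ∈ BR (tuFg m₁ μ jn g) (xs istar) := hxmemi.2.2
  obtain ⟨r, hrdef⟩ : ∃ r : ℝ, r = c istar / (g istar + A) := ⟨_, rfl⟩
  have hrnn : 0 ≤ r := by
    rw [hrdef]
    exact div_nonneg (hcpos istar histar').le (hgA istar histar').le
  have hpayxs : pay uL (xs istar) jn = Mn - xs istar istar * c istar := by
    rw [pay_uL_jn m₁ uL jn Mn hhigh (xs istar) hxsimp.2]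
    simp only [hcfun]
    rw [hgamma istar histar' (xs istar) hxmemi.1]
  have hxcA : xs istar istar * c istar ≤ A * r := by
    have h1 := halpha istar histar'
    have hcnn : 0 ≤ c istar := (hcpos istar histar').le
    calc xs istar istar * c istar ≤ A / (g istar + A) * c istar :=
          mul_le_mul_of_nonneg_right h1 hcnn
      _ = A * r := by rw [hrdef]; ring
  refine ⟨istar, histar', hxsimp, hxBR, ?_⟩
  intro x' hx' j' hj'
  by_cases hj'n : j' = jn
  · -- case j' = jn : x' is itself in f_g⁻¹(jn)
    subst hj'n
    have hb := hbeta x' hx' hj'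
    have hτs : (∑ k ∈ lowF m m₁, x' k) + (∑ k ∈ highF m m₁, x' k) = 1 := by
      rw [sum_low_high m₁ x', hx'.2]
    have hstep : A * r ≤ ∑ k ∈ lowF m m₁, x' k * c k := by
      have h2 : ∀ k ∈ lowF m m₁, x' k * (g k + A) * r ≤ x' k * c k := by
        intro k hk
        have hkl : (k : ℕ) < m₁ - 1 := (Finset.mem_filter.mp hk).2
        have hgAk := hgA k hkl
        have hrle : r ≤ c k / (g k + A) := by rw [hrdef]; exact hstarmin k hk
        have hx'nn := hx'.1 k
        calc x' k * (g k + A) * r ≤ x' k * (g k + A) * (c k / (g k + A)) :=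
              mul_le_mul_of_nonneg_left hrle (mul_nonneg hx'nn hgAk.le)
          _ = x' k * c k := by
              rw [mul_assoc, mul_comm (g k + A) _, div_mul_cancel₀ _ hgAk.ne']
      have h3 : A ≤ ∑ k ∈ lowF m m₁, x' k * (g k + A) := by
        have hexp : ∑ k ∈ lowF m m₁, x' k * (g k + A)
            = (∑ k ∈ lowF m m₁, x' k * g k) + (∑ k ∈ lowF m m₁, x' k) * A := by
          rw [Finset.sum_mul, ← Finset.sum_add_distrib]
          apply Finset.sum_congr rfl
          intro k _; ring
        rw [hexp]
        nlinarith [hb, hτs]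
      calc A * r ≤ (∑ k ∈ lowF m m₁, x' k * (g k + A)) * r :=
            mul_le_mul_of_nonneg_right h3 hrnn
        _ = ∑ k ∈ lowF m m₁, x' k * (g k + A) * r := by rw [Finset.sum_mul]
        _ ≤ ∑ k ∈ lowF m m₁, x' k * c k := Finset.sum_le_sum h2
    have hpayx' : pay uL x' j' = Mn - ∑ k ∈ lowF m m₁, x' k * c k := by
      rw [pay_uL_jn m₁ uL j' Mn hhigh x' hx'.2]
      simp only [hcfun]
    rw [hpayx', hpayxs]
    linarith
  · -- case j' ≠ jn
    have hτs : (∑ k ∈ lowF m m₁, x' k) + (∑ k ∈ highF m m₁, x' k) = 1 := by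
      rw [sum_low_high m₁ x', hx'.2]
    have hτnn : 0 ≤ ∑ k ∈ lowF m m₁, x' k := Finset.sum_nonneg (fun k _ => hx'.1 k)
    have hsnn : 0 ≤ ∑ k ∈ highF m m₁, x' k := Finset.sum_nonneg (fun k _ => hx'.1 k)
    have hBRjn := hj' jn
    rw [pay_tuFg_ne m₁ μ jn g x' hj'n, pay_tuFg_jn m₁ μ jn g x', ← hWdef] at hBRjn
    have hτN : N * (∑ k ∈ lowF m m₁, x' k) ≤ P₀ := by
      have h1 : N * (∑ k ∈ lowF m m₁, x' k) ≤ ∑ k ∈ lowF m m₁, x' k * g k := by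
        rw [Finset.mul_sum]
        apply Finset.sum_le_sum
        intro k hk
        have hkl : (k : ℕ) < m₁ - 1 := (Finset.mem_filter.mp hk).2
        rw [mul_comm]
        exact mul_le_mul_of_nonneg_left (hg k hkl) (hx'.1 k)
      have h2 : ∑ k ∈ highF m m₁, x' k * μ k j' - W * (∑ k ∈ highF m m₁, x' k)
          ≤ P₀ * (∑ k ∈ highF m m₁, x' k) := by
        have hexp : ∑ k ∈ highF m m₁, x' k * μ k j' - W * (∑ k ∈ highF m m₁, x' k)
            = ∑ k ∈ highF m m₁, x' k * (μ k j' - W) := by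
          rw [Finset.mul_sum, ← Finset.sum_sub_distrib]
          apply Finset.sum_congr rfl
          intro k _; ring
        rw [hexp]
        calc ∑ k ∈ highF m m₁, x' k * (μ k j' - W)
            ≤ ∑ k ∈ highF m m₁, x' k * P₀ := Finset.sum_le_sum (fun k _ =>
              mul_le_mul_of_nonneg_left (hmuW k j') (hx'.1 k))
          _ = P₀ * (∑ k ∈ highF m m₁, x' k) := by rw [← Finset.sum_mul, mul_comm]
      have hs1 : (∑ k ∈ highF m m₁, x' k) ≤ 1 := by linarith
      have h3 : P₀ * (∑ k ∈ highF m m₁, x' k) ≤ P₀ := by nlinarith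
      linarith
    have hτlt1 : (∑ k ∈ lowF m m₁, x' k) < 1 := by
      by_contra hcon
      push_neg at hcon
      have : N * 1 ≤ N * (∑ k ∈ lowF m m₁, x' k) := by nlinarith
      linarith
    have hspos : 0 < ∑ k ∈ highF m m₁, x' k := by linarith
    have hxhZ : normHigh m m₁ x' (∑ k ∈ highF m m₁, x' k) ∈ Zface m m₁ :=
      normHigh_mem hx' rfl hspos
    have hcomp : ∀ j'' : Fin n, j'' ≠ jn →
        pay μ (normHigh m m₁ x' (∑ k ∈ highF m m₁, x' k)) j''
          ≤ pay μ (normHigh m m₁ x' (∑ k ∈ highF m m₁, x' k)) j' := by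
      intro j'' hj''
      rw [normHigh_pay μ x' hspos j'', normHigh_pay μ x' hspos j']
      have hle := hj' j''
      rw [pay_tuFg_ne m₁ μ jn g x' hj'', pay_tuFg_ne m₁ μ jn g x' hj'n] at hle
      exact (div_le_div_iff_of_pos_right hspos).mpr hle
    have hδx : pay uL (normHigh m m₁ x' (∑ k ∈ highF m m₁, x' k)) j' ≤ Mn - δ :=
      hδ _ hxhZ j' hj'n hcomp
    have hsplit : pay uL x' j' = (∑ k ∈ lowF m m₁, x' k * uL k j')
        + (∑ k ∈ highF m m₁, x' k) * pay uL (normHigh m m₁ x' (∑ k ∈ highF m m₁, x' k)) j' := by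
      rw [normHigh_pay uL x' hspos j']
      rw [mul_div_cancel₀ _ hspos.ne']
      rw [pay, ← sum_low_high m₁]
    have hlowQ : ∑ k ∈ lowF m m₁, x' k * uL k j' ≤ (∑ k ∈ lowF m m₁, x' k) * Q := by
      rw [Finset.sum_mul]
      apply Finset.sum_le_sum
      intro k _
      exact mul_le_mul_of_nonneg_left ((le_abs_self _).trans (habsuL k j')) (hx'.1 k)
    have hmain : pay uL x' j' ≤ Mn - δ + (∑ k ∈ lowF m m₁, x' k) * (Q + |Mn - δ|) := by
      have h1 : (∑ k ∈ highF m m₁, x' k)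
            * pay uL (normHigh m m₁ x' (∑ k ∈ highF m m₁, x' k)) j'
          ≤ (∑ k ∈ highF m m₁, x' k) * (Mn - δ) := mul_le_mul_of_nonneg_left hδx hsnn
      have h3 : -((∑ k ∈ lowF m m₁, x' k) * (Mn - δ))
          ≤ (∑ k ∈ lowF m m₁, x' k) * |Mn - δ| := by
        have := neg_le_abs (Mn - δ)
        nlinarith
      have h2 : (∑ k ∈ highF m m₁, x' k) * (Mn - δ)
          = (Mn - δ) - (∑ k ∈ lowF m m₁, x' k) * (Mn - δ) := by
        linear_combination (Mn - δ) * hτs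
      have h4 : (∑ k ∈ lowF m m₁, x' k) * (Q + |Mn - δ|)
          = (∑ k ∈ lowF m m₁, x' k) * Q + (∑ k ∈ lowF m m₁, x' k) * |Mn - δ| := by ring
      rw [hsplit]
      linarith [hlowQ, h1, h2, h3, h4]
    -- final comparison
    have hxcP : xs istar istar * c istar ≤ P₀ * SC / N := by
      have h1 : A * r = A * c istar / (g istar + A) := by rw [hrdef]; ring
      have h2 : A * c istar ≤ P₀ * SC := by
        have hc1 := hcSC istar histar
        have hcnn : 0 ≤ c istar := (hcpos istar histar').le
        nlinarith
      have h3 : N ≤ g istar + A := by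
        have := hg istar histar'
        linarith
      have h4 : A * c istar / (g istar + A) ≤ P₀ * SC / N :=
        div_le_div₀ (by nlinarith) h2 hNpos h3
      linarith [hxcA]
    have hτQb : (∑ k ∈ lowF m m₁, x' k) * (Q + |Mn - δ|)
        ≤ P₀ / N * (Q + |Mn - δ|) := by
      have hτP : (∑ k ∈ lowF m m₁, x' k) ≤ P₀ / N := by
        rw [le_div_iff₀ hNpos]
        linarith [hτN]
      have habsnn : (0:ℝ) ≤ Q + |Mn - δ| := by positivity
      exact mul_le_mul_of_nonneg_right hτP habsnn
    have hfinal : P₀ / N * (Q + |Mn - δ|) + P₀ * SC / N ≤ δ := by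
      have h1 : P₀ / N * (Q + |Mn - δ|) + P₀ * SC / N
          = P₀ * (Q + |Mn - δ| + SC) / N := by ring
      rw [h1, div_le_iff₀ hNpos]
      nlinarith [hNδ]
    rw [hpayxs]
    linarith
end
end

section
/- Assume n ≥ 2, M_{{1}} ≤ M_{{2}}, and min_{x∈Δ_m} u^L(x,2) < M_{{1}}. Then there exist x, y ∈ Δ_m such that u^L(x,1) = u^L(y,2) = M_{{1,2}}. -/
open scoped Classical
open Finset

noncomputable section

/-- there exist x, y ∈ Δ_m with u^L(x,1) = u^L(y,2) = M_{1,2}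
(the first reference pair). Actions 1, 2 are j1, j2. -/
theorem first_reference_pair {m n : ℕ} (hm : 0 < m)
    (uL : Fin m → Fin n → ℝ) (j1 j2 : Fin n) (hj : j1 ≠ j2)
    (hM : Mval uL {j1} ≤ Mval uL {j2})
    (hmin : sInf ((fun x => pay uL x j2) '' simplex m) < Mval uL {j1}) :
    ∃ x ∈ simplex m, ∃ y ∈ simplex m,
      pay uL x j1 = Mval uL {j1, j2} ∧ pay uL y j2 = Mval uL {j1, j2} := by
  classical
  set K : Set (Fin m → ℝ) := simplex m with hKdef
  have hKc : IsCompact K := isCompact_stdSimplex ℝ (Fin m)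
  have hKne : K.Nonempty := by
    refine ⟨Pi.single ⟨0, hm⟩ 1, ?_⟩
    show Pi.single (⟨0, hm⟩ : Fin m) (1 : ℝ) ∈ stdSimplex ℝ (Fin m)
    exact single_mem_stdSimplex ℝ _
  have hKconn : IsPreconnected K := (convex_stdSimplex ℝ (Fin m)).isPreconnected
  set f1 : (Fin m → ℝ) → ℝ := fun x => pay uL x j1 with hf1def
  set f2 : (Fin m → ℝ) → ℝ := fun x => pay uL x j2 with hf2def
  have hcont : ∀ j : Fin n, Continuous fun x : Fin m → ℝ => pay uL x j := by
    intro j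
    exact continuous_finset_sum _ fun i _ => (continuous_apply i).mul continuous_const
  set g : (Fin m → ℝ) → ℝ := fun x => min (f1 x) (f2 x) with hgdef
  have hgc : Continuous g := (hcont j1).min (hcont j2)
  -- Identify Mval with sSup of simple images
  have hminS : ∀ x, minOnL uL {j1} x = f1 x := by
    intro x; simp [minOnL, Set.image_singleton]; rfl
  have hminS2 : ∀ x, minOnL uL {j2} x = f2 x := by
    intro x; simp [minOnL, Set.image_singleton]; rfl
  have hmin12 : ∀ x, minOnL uL {j1, j2} x = g x := by
    intro x; simp [minOnL, Set.image_pair, csInf_pair, hgdef]; rfl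
  have hM1 : Mval uL {j1} = sSup (f1 '' K) := by
    unfold Mval; congr 1; exact Set.image_congr fun x _ => hminS x
  have hM2 : Mval uL {j2} = sSup (f2 '' K) := by
    unfold Mval; congr 1; exact Set.image_congr fun x _ => hminS2 x
  have hM12 : Mval uL {j1, j2} = sSup (g '' K) := by
    unfold Mval; congr 1; exact Set.image_congr fun x _ => hmin12 x
  -- extremizers
  obtain ⟨a1, ha1K, ha1'⟩ := hKc.exists_sInf_image_eq hKne (hcont j1).continuousOn
  obtain ⟨b1, hb1K, hb1'⟩ := hKc.exists_sSup_image_eq hKne (hcont j1).continuousOn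
  obtain ⟨a2, ha2K, ha2'⟩ := hKc.exists_sInf_image_eq hKne (hcont j2).continuousOn
  obtain ⟨b2, hb2K, hb2'⟩ := hKc.exists_sSup_image_eq hKne (hcont j2).continuousOn
  have ha1 : sInf (f1 '' K) = f1 a1 := ha1'
  have hb1 : sSup (f1 '' K) = f1 b1 := hb1'
  have ha2 : sInf (f2 '' K) = f2 a2 := ha2'
  have hb2 : sSup (f2 '' K) = f2 b2 := hb2'
  have hbdd1 : BddAbove (f1 '' K) := (hKc.image (hcont j1)).bddAbove
  have hbdd2 : BddAbove (f2 '' K) := (hKc.image (hcont j2)).bddAbove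
  have hbddg : BddAbove (g '' K) := (hKc.image hgc).bddAbove
  have hbddb1 : BddBelow (f1 '' K) := (hKc.image (hcont j1)).bddBelow
  have hbddb2 : BddBelow (f2 '' K) := (hKc.image (hcont j2)).bddBelow
  set m1 : ℝ := sInf (f1 '' K)
  set m2 : ℝ := sInf (f2 '' K)
  set M1 : ℝ := sSup (f1 '' K)
  set M2 : ℝ := sSup (f2 '' K)
  set M12 : ℝ := sSup (g '' K)
  have hm2M1 : m2 < M1 := by rw [hM1] at hmin; exact hmin
  have hM1M2 : M1 ≤ M2 := by rw [hM1, hM2] at hM; exact hM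
  -- M12 ≤ M1
  have hupper : M12 ≤ M1 := by
    apply csSup_le (hKne.image g)
    rintro _ ⟨x, hx, rfl⟩
    exact le_trans (min_le_left _ _) (le_csSup hbdd1 ⟨x, hx, rfl⟩)
  -- m1 ≤ M12 via b2
  have hlow1 : m1 ≤ M12 := by
    have h1 : m1 ≤ f1 b2 := csInf_le hbddb1 ⟨b2, hb2K, rfl⟩
    have h2 : m1 ≤ f2 b2 := by
      rw [← hb2]
      calc m1 ≤ f1 b1 := csInf_le hbddb1 ⟨b1, hb1K, rfl⟩
        _ ≤ M1 := le_csSup hbdd1 ⟨b1, hb1K, rfl⟩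
        _ ≤ M2 := hM1M2
    calc m1 ≤ g b2 := le_min h1 h2
      _ ≤ M12 := le_csSup hbddg ⟨b2, hb2K, rfl⟩
  -- m2 ≤ M12 via b1
  have hlow2 : m2 ≤ M12 := by
    have h1 : m2 ≤ f1 b1 := by rw [← hb1]; exact le_of_lt hm2M1
    have h2 : m2 ≤ f2 b1 := csInf_le hbddb2 ⟨b1, hb1K, rfl⟩
    calc m2 ≤ g b1 := le_min h1 h2
      _ ≤ M12 := le_csSup hbddg ⟨b1, hb1K, rfl⟩
  have hupper2 : M12 ≤ M2 := le_trans hupper hM1M2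
  -- intermediate value for f1
  have hiv1 : Set.Icc (f1 a1) (f1 b1) ⊆ f1 '' K :=
    hKconn.intermediate_value ha1K hb1K (hcont j1).continuousOn
  have hx : M12 ∈ f1 '' K := hiv1 ⟨by rw [← ha1]; exact hlow1, by rw [← hb1]; exact hupper⟩
  have hiv2 : Set.Icc (f2 a2) (f2 b2) ⊆ f2 '' K :=
    hKconn.intermediate_value ha2K hb2K (hcont j2).continuousOn
  have hy : M12 ∈ f2 '' K := hiv2 ⟨by rw [← ha2]; exact hlow2, by rw [← hb2]; exact hupper2⟩
  obtain ⟨x, hxK, hxv⟩ := hx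
  obtain ⟨y, hyK, hyv⟩ := hy
  exact ⟨x, hxK, y, hyK, by rw [hM12]; exact hxv, by rw [hM12]; exact hyv⟩
end
end
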